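/- arXiv:1103.2322 — 2 statements merged into one kernel-verified Lean document; each statement's English description precedes it below -/
import Mathlib

section
/- Let (Ω, 𝔉, P) be a probability space. For each t > 0 let μ_t : Ω → M(ℝ) be a random locally finite Borel measure on ℝ and X_t : Ω → ℝ a random variable, and let (μ, X) be a further such pair. Assume: (i) for every bounded continuous f, h : ℝ → ℝ and every continuous compactly supported φ : ℝ → ℝ, E[f(∫ φ dμ_t)·h(X_t)] → E[f(∫ φ dμ)·h(X)] as t → ∞; (ii) for every compact C ⊆ ℝ, sup_t E[μ_t(C)] < ∞ and E[μ(C)] < ∞. Then for every continuous compactly supported φ : ℝ → ℝ and every bounded continuous g : ℝ → ℝ, E[g(∫ φ(y+X_t) μ_t(dy))] → E[g(∫ φ(y+X) μ(dy))] as t → ∞. -/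
open MeasureTheory Filter Topology
open scoped ENNReal

lemma RMTC_meas_fixed {Ω : Type*} [MeasurableSpace Ω] (m : Ω → Measure ℝ) (hm : Measurable m)
    (hloc : ∀ ω, IsLocallyFiniteMeasure (m ω)) (ψ : ℝ → ℝ) (hψ : Continuous ψ)
    (hψc : HasCompactSupport ψ) :
    Measurable fun ω => ∫ y, ψ y ∂(m ω) := by
  have h1 : Measurable fun ω => (∫⁻ y, ENNReal.ofReal (ψ y) ∂(m ω)) :=
    (Measure.measurable_lintegral (ENNReal.measurable_ofReal.comp hψ.measurable)).comp hm
  have h2 : Measurable fun ω => (∫⁻ y, ENNReal.ofReal (-ψ y) ∂(m ω)) :=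
    (Measure.measurable_lintegral (ENNReal.measurable_ofReal.comp hψ.neg.measurable)).comp hm
  have heq : (fun ω => ∫ y, ψ y ∂(m ω)) = fun ω =>
      (∫⁻ y, ENNReal.ofReal (ψ y) ∂(m ω)).toReal - (∫⁻ y, ENNReal.ofReal (-ψ y) ∂(m ω)).toReal := by
    funext ω
    haveI := hloc ω
    exact integral_eq_lintegral_pos_part_sub_lintegral_neg_part
      (hψ.integrable_of_hasCompactSupport hψc)
  rw [heq]
  exact h1.ennreal_toReal.sub h2.ennreal_toReal

lemma RMTC_meas_joint {Ω : Type*} [MeasurableSpace Ω] (m : Ω → Measure ℝ) (hm : Measurable m)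
    (hloc : ∀ ω, IsLocallyFiniteMeasure (m ω)) (x : Ω → ℝ) (hx : Measurable x)
    (φ : ℝ → ℝ) (hφ : Continuous φ) (hφc : HasCompactSupport φ) :
    Measurable fun ω => ∫ y, φ (y + x ω) ∂(m ω) := by
  obtain ⟨r, hr⟩ := (hφc.isBounded).subset_closedBall 0
  obtain ⟨Mφ, hMφ⟩ : ∃ Mφ : ℝ, ∀ z, |φ z| ≤ Mφ := by
    obtain ⟨C, hC⟩ := (hφ.abs).bounded_above_of_compact_support hφc.abs
    exact ⟨C, fun z => by simpa using hC z⟩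
  set u : ℝ → Ω → ℝ := fun c ω => ∫ y, φ (y + c) ∂(m ω) with hu
  have hmeas : ∀ c, Measurable (u c) := fun c =>
    RMTC_meas_fixed m hm hloc _ (hφ.comp (continuous_id.add continuous_const))
      (hφc.comp_homeomorph (Homeomorph.addRight c))
  have hcont : ∀ ω, Continuous fun c => u c ω := by
    intro ω
    haveI := hloc ω
    rw [continuous_iff_continuousAt]
    intro c₀
    have hball : Metric.closedBall c₀ 1 ∈ 𝓝 c₀ := Metric.closedBall_mem_nhds c₀ one_pos
    refine tendsto_integral_filter_of_dominated_convergence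
      ((Metric.closedBall (0:ℝ) (r + |c₀| + 1)).indicator fun _ => Mφ) ?_ ?_ ?_ ?_
    · exact Eventually.of_forall fun c =>
        (hφ.comp (continuous_id.add continuous_const)).aestronglyMeasurable
    · filter_upwards [hball] with c hc
      refine Eventually.of_forall fun y => ?_
      by_cases hy : y ∈ Metric.closedBall (0:ℝ) (r + |c₀| + 1)
      · rw [Set.indicator_of_mem hy]
        simpa [Real.norm_eq_abs] using hMφ (y + c)
      · rw [Set.indicator_of_notMem hy]
        have hzero : φ (y + c) = 0 := by
          by_contra h0
          have : y + c ∈ tsupport φ := subset_tsupport φ (by simpa using h0)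
          have h1 : |y + c| ≤ r := by
            have := hr this
            simpa [Real.dist_eq] using this
          have h2 : |c - c₀| ≤ 1 := by simpa [Real.dist_eq] using hc
          have : |y| ≤ r + |c₀| + 1 := by
            have h4 : |c| ≤ |c₀| + 1 := by
              have := abs_sub_abs_le_abs_sub c c₀
              linarith [abs_nonneg (c - c₀)]
            calc |y| ≤ |y + c| + |c| := by
                  have := abs_add_le (y + c) (-c); simpa using this
              _ ≤ r + (|c₀| + 1) := add_le_add h1 h4
              _ = r + |c₀| + 1 := by ring
          exact hy (by simpa [Real.dist_eq, Metric.mem_closedBall] using this)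
        simp [hzero]
    · refine (IntegrableOn.integrable_indicator ?_ measurableSet_closedBall)
      exact integrableOn_const (isCompact_closedBall _ _).measure_lt_top.ne
    · exact Eventually.of_forall fun y =>
        ((hφ.comp (continuous_const.add continuous_id)).tendsto c₀)
  have := (measurable_uncurry_of_continuous_of_measurable hcont hmeas).comp
    (hx.prodMk measurable_id)
  exact this

set_option maxHeartbeats 2000000 in
/-- if the pairs `(μ_t, X_t)` of random locally finite measures and random
variables converge jointly, in the sense of expectations of bounded continuous functionals,
to `(ν, Y)`, and first moments of the masses of compact sets are uniformly bounded, then the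
randomly translated integrals converge as well. -/
theorem random_measure_translation_continuity
    {Ω : Type*} [MeasurableSpace Ω] (P : Measure Ω) [IsProbabilityMeasure P]
    (μ : ℝ → Ω → Measure ℝ) (X : ℝ → Ω → ℝ)
    (ν : Ω → Measure ℝ) (Y : Ω → ℝ)
    (hμloc : ∀ t ω, IsLocallyFiniteMeasure (μ t ω))
    (hνloc : ∀ ω, IsLocallyFiniteMeasure (ν ω))
    (hμmeas : ∀ t, Measurable (μ t)) (hXmeas : ∀ t, Measurable (X t))
    (hνmeas : Measurable ν) (hYmeas : Measurable Y)
    (hconv : ∀ (f h : BoundedContinuousFunction ℝ ℝ) (φ : ℝ → ℝ),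
      Continuous φ → HasCompactSupport φ →
      Tendsto (fun t : ℝ => ∫ ω, f (∫ y, φ y ∂(μ t ω)) * h (X t ω) ∂P) atTop
        (𝓝 (∫ ω, f (∫ y, φ y ∂(ν ω)) * h (Y ω) ∂P)))
    (hbound : ∀ C : Set ℝ, IsCompact C →
      (∃ M : ℝ≥0∞, M ≠ ⊤ ∧ ∀ t : ℝ, (∫⁻ ω, μ t ω C ∂P) ≤ M) ∧ (∫⁻ ω, ν ω C ∂P) < ⊤)
    (φ : ℝ → ℝ) (hφ : Continuous φ) (hφc : HasCompactSupport φ)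
    (g : BoundedContinuousFunction ℝ ℝ) :
    Tendsto (fun t : ℝ => ∫ ω, g (∫ y, φ (y + X t ω) ∂(μ t ω)) ∂P) atTop
      (𝓝 (∫ ω, g (∫ y, φ (y + Y ω) ∂(ν ω)) ∂P)) := by
  rw [Metric.tendsto_nhds]
  intro ε hε
  -- small constants
  set ε₁ : ℝ := ε / 8 with hε₁def
  have hε₁ : 0 < ε₁ := by positivity
  have hgnn : (0:ℝ) ≤ ‖g‖ := norm_nonneg _
  set ε' : ℝ := ε / (32 * (‖g‖ + 1)) with hε'def
  have hε' : 0 < ε' := by positivity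
  have hkeyarith : 2 * ‖g‖ * (2 * ε') ≤ ε₁ := by
    have h2 : 4 * (‖g‖ + 1) * ε' = ε₁ := by
      rw [hε'def, hε₁def]; field_simp; ring
    nlinarith [hε'.le]
  -- support bound for φ
  obtain ⟨K, hK0, hKsupp⟩ : ∃ K : ℝ, 0 ≤ K ∧ tsupport φ ⊆ Set.Icc (-K) K := by
    obtain ⟨r, hr⟩ := (hφc.isBounded).subset_closedBall 0
    refine ⟨max r 0, le_max_right _ _, fun z hz => ?_⟩
    have h1 := hr hz
    simp only [Metric.mem_closedBall, Real.dist_eq, sub_zero] at h1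
    have : |z| ≤ max r 0 := h1.trans (le_max_left _ _)
    exact Set.mem_Icc.2 (abs_le.1 this)
  -- sup bound for φ
  obtain ⟨Mφ, hMφ⟩ : ∃ Mφ : ℝ, ∀ z, |φ z| ≤ Mφ := by
    obtain ⟨C, hC⟩ := (hφ.abs).bounded_above_of_compact_support hφc.abs
    exact ⟨C, fun z => by simpa using hC z⟩
  have hMφ0 : 0 ≤ Mφ := (abs_nonneg _).trans (hMφ 0)
  -- tightness of Y
  obtain ⟨R, hR0, hRY⟩ : ∃ R : ℝ, 0 ≤ R ∧ (P {ω | R ≤ |Y ω|}).toReal ≤ ε' := by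
    set s : ℕ → Set Ω := fun k => {ω | (k:ℝ) ≤ |Y ω|} with hsdef
    have hsm : ∀ k, MeasurableSet (s k) := fun k => measurableSet_le measurable_const hYmeas.abs
    have hanti : Antitone s := by
      intro i j hij ω hω
      have hcast : (i:ℝ) ≤ (j:ℝ) := by exact_mod_cast hij
      exact le_trans hcast hω
    have hempty : ⋂ k, s k = ∅ := by
      ext ω
      simp only [Set.mem_iInter, Set.mem_empty_iff_false, iff_false, not_forall, hsdef,
        Set.mem_setOf_eq, not_le]
      obtain ⟨k, hk⟩ := exists_nat_gt (|Y ω|)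
      exact ⟨k, hk⟩
    have htend := tendsto_measure_iInter_atTop (fun k => (hsm k).nullMeasurableSet) hanti
      ⟨0, measure_ne_top P _⟩
    rw [hempty, measure_empty] at htend
    have hev : ∀ᶠ k in atTop, P (s k) < ENNReal.ofReal ε' :=
      htend.eventually_lt_const (ENNReal.ofReal_pos.2 hε')
    obtain ⟨k, hk⟩ := hev.exists
    exact ⟨(k:ℝ), Nat.cast_nonneg k, ENNReal.toReal_le_of_le_ofReal hε'.le hk.le⟩
  -- tail function χ
  set χf : ℝ → ℝ := fun z => min 1 (max 0 (|z| - R)) with hχfdef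
  have hχfcont : Continuous χf :=
    continuous_const.min (continuous_const.max ((continuous_abs).sub continuous_const))
  have hχf01 : ∀ z, 0 ≤ χf z ∧ χf z ≤ 1 := fun z =>
    ⟨le_min one_pos.le (le_max_left _ _), min_le_left _ _⟩
  have hχf0 : ∀ z, |z| ≤ R → χf z = 0 := by
    intro z hz
    show min 1 (max 0 (|z| - R)) = 0
    rw [max_eq_left (by linarith), min_eq_right zero_le_one]
  have hχf1 : ∀ z, R + 1 ≤ |z| → χf z = 1 := by
    intro z hz
    show min 1 (max 0 (|z| - R)) = 1
    exact min_eq_left (le_max_of_le_right (by linarith))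
  set χ : BoundedContinuousFunction ℝ ℝ :=
    BoundedContinuousFunction.ofNormedAddCommGroup χf hχfcont 1
      (fun z => by
        rw [Real.norm_eq_abs, abs_le]
        exact ⟨by linarith [(hχf01 z).1], (hχf01 z).2⟩) with hχdef
  have hχcoe : ∀ z, χ z = χf z := fun z => rfl
  -- convergence of E[χ(X_t)]
  have hχconv : Tendsto (fun t : ℝ => ∫ ω, χ (X t ω) ∂P) atTop (𝓝 (∫ ω, χ (Y ω) ∂P)) := by
    have h := hconv (BoundedContinuousFunction.const ℝ (1:ℝ)) χ φ hφ hφc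
    simpa using h
  -- integrability of bounded measurable functions
  have hbddint : ∀ (F : Ω → ℝ) (c : ℝ), Measurable F → (∀ ω, |F ω| ≤ c) → Integrable F P := by
    intro F c hFm hFb
    refine Integrable.mono' (integrable_const c) hFm.aestronglyMeasurable ?_
    exact Eventually.of_forall fun ω => by rw [Real.norm_eq_abs]; exact hFb ω
  -- E[χ(Y)] ≤ ε'
  have hχY : ∫ ω, χ (Y ω) ∂P ≤ ε' := by
    have hint : Integrable (fun ω => χ (Y ω)) P :=
      hbddint _ 1 (χ.continuous.measurable.comp hYmeas)
        (fun ω => by rw [hχcoe]; exact abs_le.2 ⟨by linarith [(hχf01 (Y ω)).1], (hχf01 (Y ω)).2⟩)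
    have hsm : MeasurableSet {ω | R ≤ |Y ω|} := measurableSet_le measurable_const hYmeas.abs
    have hind : Integrable ({ω | R ≤ |Y ω|}.indicator (fun _ => (1:ℝ))) P :=
      (integrable_const 1).indicator hsm
    calc ∫ ω, χ (Y ω) ∂P ≤ ∫ ω, {ω | R ≤ |Y ω|}.indicator (fun _ => (1:ℝ)) ω ∂P := by
          refine integral_mono hint hind (fun ω => ?_)
          by_cases h : R ≤ |Y ω|
          · have hm : ω ∈ {ω | R ≤ |Y ω|} := h
            rw [Set.indicator_of_mem hm, hχcoe]; exact (hχf01 (Y ω)).2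
          · have hm : ω ∉ {ω | R ≤ |Y ω|} := h
            rw [Set.indicator_of_notMem hm, hχcoe, hχf0 _ (not_le.1 h).le]
      _ = (P {ω | R ≤ |Y ω|}).toReal := by rw [integral_indicator_const _ hsm]; simp [Measure.real]
      _ ≤ ε' := hRY
  -- eventually the X_t tail is small
  have hXtail : ∀ᶠ t in atTop, (P {ω | R + 1 ≤ |X t ω|}).toReal ≤ 2 * ε' := by
    have hev : ∀ᶠ t in atTop, ∫ ω, χ (X t ω) ∂P < 2 * ε' :=
      hχconv.eventually_lt_const (lt_of_le_of_lt hχY (by linarith))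
    filter_upwards [hev] with t ht
    have hsm : MeasurableSet {ω | R + 1 ≤ |X t ω|} :=
      measurableSet_le measurable_const (hXmeas t).abs
    have hint : Integrable (fun ω => χ (X t ω)) P :=
      hbddint _ 1 (χ.continuous.measurable.comp (hXmeas t))
        (fun ω => by rw [hχcoe]; exact abs_le.2 ⟨by linarith [(hχf01 (X t ω)).1],
          (hχf01 (X t ω)).2⟩)
    have hind : Integrable ({ω | R + 1 ≤ |X t ω|}.indicator (fun _ => (1:ℝ))) P :=
      (integrable_const 1).indicator hsm
    have h1 : (P {ω | R + 1 ≤ |X t ω|}).toReal ≤ ∫ ω, χ (X t ω) ∂P := by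
      calc (P {ω | R + 1 ≤ |X t ω|}).toReal
          = ∫ ω, {ω | R + 1 ≤ |X t ω|}.indicator (fun _ => (1:ℝ)) ω ∂P := by
            rw [integral_indicator_const _ hsm]; simp [Measure.real]
        _ ≤ ∫ ω, χ (X t ω) ∂P := by
            refine integral_mono hind hint (fun ω => ?_)
            by_cases h : R + 1 ≤ |X t ω|
            · have hm : ω ∈ {ω | R + 1 ≤ |X t ω|} := h
              rw [Set.indicator_of_mem hm, hχcoe, hχf1 _ h]
            · have hm : ω ∉ {ω | R + 1 ≤ |X t ω|} := h
              rw [Set.indicator_of_notMem hm, hχcoe]; exact (hχf01 (X t ω)).1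
    linarith
  -- the compact set C
  set C : Set ℝ := Set.Icc (-(K + R + 3)) (K + R + 3) with hCdef
  have hCcomp : IsCompact C := isCompact_Icc
  have hCm : MeasurableSet C := measurableSet_Icc
  obtain ⟨⟨M, hMtop, hMbd⟩, hMν⟩ := hbound C hCcomp
  set Mν : ℝ≥0∞ := ∫⁻ ω, ν ω C ∂P with hMνdef
  set A : ℝ≥0∞ := (M + Mν + 1) / ENNReal.ofReal ε' with hAdef
  have hnumtop : M + Mν + 1 ≠ ⊤ := by
    refine ENNReal.add_ne_top.2 ⟨ENNReal.add_ne_top.2 ⟨hMtop, hMν.ne⟩, ENNReal.one_ne_top⟩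
  have hofne : ENNReal.ofReal ε' ≠ 0 := (ENNReal.ofReal_pos.2 hε').ne'
  have hAtop : A ≠ ⊤ := (ENNReal.div_lt_top hnumtop hofne).ne
  have hA0 : A ≠ 0 := by
    rw [hAdef]
    refine (ENNReal.div_pos ?_ ENNReal.ofReal_ne_top).ne'
    simp
  set Ar : ℝ := A.toReal with hArdef
  have hAr0 : 0 ≤ Ar := ENNReal.toReal_nonneg
  -- Markov bounds
  have hAmul : ENNReal.ofReal ε' * A = M + Mν + 1 := by
    rw [hAdef, mul_comm]
    exact ENNReal.div_mul_cancel hofne ENNReal.ofReal_ne_top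
  have hMark : ∀ t : ℝ, (P {ω | A ≤ μ t ω C}).toReal ≤ ε' := by
    intro t
    have h1 : P {ω | A ≤ μ t ω C} ≤ (∫⁻ ω, μ t ω C ∂P) / A :=
      meas_ge_le_lintegral_div ((Measure.measurable_coe hCm).comp (hμmeas t)).aemeasurable hA0 hAtop
    have h2 : (∫⁻ ω, μ t ω C ∂P) / A ≤ M / A := ENNReal.div_le_div_right (hMbd t) A
    have h3 : M / A ≤ ENNReal.ofReal ε' := by
      refine ENNReal.div_le_of_le_mul ?_
      rw [hAmul]
      calc M ≤ M + (Mν + 1) := le_add_right le_rfl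
        _ = M + Mν + 1 := by rw [add_assoc]
    exact ENNReal.toReal_le_of_le_ofReal hε'.le ((h1.trans h2).trans h3)
  have hMarkν : (P {ω | A ≤ ν ω C}).toReal ≤ ε' := by
    have h1 : P {ω | A ≤ ν ω C} ≤ (∫⁻ ω, ν ω C ∂P) / A :=
      meas_ge_le_lintegral_div ((Measure.measurable_coe hCm).comp hνmeas).aemeasurable hA0 hAtop
    have h3 : Mν / A ≤ ENNReal.ofReal ε' := by
      refine ENNReal.div_le_of_le_mul ?_
      rw [hAmul]
      calc Mν ≤ M + Mν := le_add_self
        _ ≤ M + Mν + 1 := le_add_right le_rfl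
    exact ENNReal.toReal_le_of_le_ofReal hε'.le (h1.trans h3)
  -- vanishing of the translates off C
  have hsuppC : ∀ c : ℝ, |c| ≤ R + 3 → ∀ y : ℝ, y ∉ C → φ (y + c) = 0 := by
    intro c hc y hy
    by_contra h0
    have hmem : y + c ∈ tsupport φ := subset_tsupport φ (by simpa using h0)
    have h1 : |y + c| ≤ K := by
      have := hKsupp hmem; rw [Set.mem_Icc] at this; exact abs_le.2 this
    have : |y| ≤ K + R + 3 := by
      calc |y| ≤ |y + c| + |c| := by
            have := abs_add_le (y + c) (-c); simpa using this
        _ ≤ K + (R + 3) := add_le_add h1 hc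
        _ = K + R + 3 := by ring
    exact hy (Set.mem_Icc.2 (abs_le.1 this))
  -- integrability of translates
  have hφtransint : ∀ (mm : Measure ℝ), IsLocallyFiniteMeasure mm → ∀ c : ℝ,
      Integrable (fun y => φ (y + c)) mm := by
    intro mm hmm c
    haveI := hmm
    exact (hφ.comp (continuous_id.add continuous_const)).integrable_of_hasCompactSupport
      (hφc.comp_homeomorph (Homeomorph.addRight c))
  -- bound on translated integrals
  set B : ℝ := Mφ * Ar with hBdef
  have hIbound : ∀ (mm : Measure ℝ), IsLocallyFiniteMeasure mm → ∀ c : ℝ, |c| ≤ R + 3 →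
      mm C ≤ A → |∫ y, φ (y + c) ∂mm| ≤ B := by
    intro mm hmm c hc hA
    haveI := hmm
    have hint := hφtransint mm hmm c
    have hCfin : mm C < ⊤ := hCcomp.measure_lt_top
    have hindint : Integrable (C.indicator fun _ => Mφ) mm :=
      IntegrableOn.integrable_indicator (integrableOn_const hCfin.ne) hCm
    calc |∫ y, φ (y + c) ∂mm| ≤ ∫ y, |φ (y + c)| ∂mm := by
          simpa [Real.norm_eq_abs] using norm_integral_le_integral_norm (fun y => φ (y + c)) (μ := mm)
      _ ≤ ∫ y, C.indicator (fun _ => Mφ) y ∂mm := by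
          refine integral_mono hint.abs hindint (fun y => ?_)
          by_cases hy : y ∈ C
          · rw [Set.indicator_of_mem hy]; exact hMφ _
          · rw [Set.indicator_of_notMem hy, hsuppC c hc y hy]; simp
      _ = (mm C).toReal * Mφ := by rw [integral_indicator_const _ hCm]; simp [smul_eq_mul, Measure.real]
      _ ≤ Ar * Mφ :=
          mul_le_mul_of_nonneg_right (ENNReal.toReal_mono hAtop hA) hMφ0
      _ = B := by rw [hBdef]; ring
  -- modulus of continuity for g on [-B, B]
  obtain ⟨θ, hθ0, hθ⟩ : ∃ θ : ℝ, 0 < θ ∧ ∀ u v : ℝ, |u| ≤ B → |v| ≤ B → |u - v| < θ →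
      |g u - g v| ≤ ε₁ := by
    have huc := isCompact_Icc.uniformContinuousOn_of_continuous
      (g.continuous.continuousOn : ContinuousOn g (Set.Icc (-B) B))
    rw [Metric.uniformContinuousOn_iff] at huc
    obtain ⟨θ, hθ0, hθ⟩ := huc ε₁ hε₁
    refine ⟨θ, hθ0, fun u v hu hv huv => ?_⟩
    have := hθ u (Set.mem_Icc.2 (abs_le.1 hu)) v (Set.mem_Icc.2 (abs_le.1 hv))
      (by rwa [Real.dist_eq])
    rw [Real.dist_eq] at this
    exact this.le
  -- modulus for φ
  set η : ℝ := θ / (Ar + 1) with hηdef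
  have hη0 : 0 < η := by positivity
  obtain ⟨δφ, hδφ0, hδφ⟩ : ∃ δφ : ℝ, 0 < δφ ∧ ∀ z w : ℝ, |z - w| < δφ → |φ z - φ w| < η := by
    have huc := hφ.uniformContinuous_of_tendsto_cocompact hφc.is_zero_at_infty
    rw [Metric.uniformContinuous_iff] at huc
    obtain ⟨δφ, h1, h2⟩ := huc η hη0
    refine ⟨δφ, h1, fun z w hzw => ?_⟩
    have := h2 (a := z) (b := w) (by rwa [Real.dist_eq])
    rwa [Real.dist_eq] at this
  -- difference bound
  have hIdiff : ∀ (mm : Measure ℝ), IsLocallyFiniteMeasure mm → ∀ c c' : ℝ,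
      |c| ≤ R + 3 → |c'| ≤ R + 3 → |c - c'| < δφ → mm C ≤ A →
      |(∫ y, φ (y + c) ∂mm) - ∫ y, φ (y + c') ∂mm| < θ := by
    intro mm hmm c c' hc hc' hcc hA
    haveI := hmm
    have hint := hφtransint mm hmm c
    have hint' := hφtransint mm hmm c'
    have hCfin : mm C < ⊤ := hCcomp.measure_lt_top
    have hindint : Integrable (C.indicator fun _ => η) mm :=
      IntegrableOn.integrable_indicator (integrableOn_const hCfin.ne) hCm
    have hle : |(∫ y, φ (y + c) ∂mm) - ∫ y, φ (y + c') ∂mm| ≤ (mm C).toReal * η := by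
      rw [← integral_sub hint hint']
      calc |∫ y, φ (y + c) - φ (y + c') ∂mm| ≤ ∫ y, |φ (y + c) - φ (y + c')| ∂mm := by
            simpa [Real.norm_eq_abs] using
              norm_integral_le_integral_norm (fun y => φ (y + c) - φ (y + c')) (μ := mm)
        _ ≤ ∫ y, C.indicator (fun _ => η) y ∂mm := by
            refine integral_mono (hint.sub hint').abs hindint (fun y => ?_)
            by_cases hy : y ∈ C
            · rw [Set.indicator_of_mem hy]
              exact (hδφ (y + c) (y + c') (by rw [show y + c - (y + c') = c - c' by ring]; exact hcc)).le
            · rw [Set.indicator_of_notMem hy, hsuppC c hc y hy, hsuppC c' hc' y hy]; simp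
        _ = (mm C).toReal * η := by rw [integral_indicator_const _ hCm]; simp [smul_eq_mul, Measure.real]
    have h2 : (mm C).toReal * η ≤ Ar * η :=
      mul_le_mul_of_nonneg_right (ENNReal.toReal_mono hAtop hA) hη0.le
    have h3 : Ar * η < θ := by
      rw [hηdef, mul_div_assoc']
      rw [div_lt_iff₀ (by linarith)]
      nlinarith
    exact lt_of_le_of_lt (hle.trans h2) h3
  -- grid
  set δ : ℝ := min (δφ / 3) 1 with hδdef
  have hδ0 : 0 < δ := lt_min (by positivity) one_pos
  have hδ1 : δ ≤ 1 := min_le_right _ _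
  have h2δ : 2 * δ < δφ := by
    have : δ ≤ δφ / 3 := min_le_left _ _
    linarith
  set a : ℝ := -(R + 2) with hadef
  set n : ℕ := ⌈(2 * R + 4) / δ⌉₊ with hndef
  have hnδ : 2 * R + 4 ≤ n * δ := by
    have h1 : (2 * R + 4) / δ ≤ (n : ℝ) := Nat.le_ceil _
    calc 2 * R + 4 = (2 * R + 4) / δ * δ := by field_simp
      _ ≤ n * δ := by nlinarith
  set p : ℕ → ℝ := fun i => a + i * δ with hpdef
  have hp_succ : ∀ i : ℕ, p (i + 1) = p i + δ := by
    intro i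
    show a + (i + 1 : ℕ) * δ = a + i * δ + δ
    push_cast; ring
  set U : ℕ → ℝ → ℝ := fun i z => min 1 (max 0 ((z - p i) / δ)) with hUdef
  have hUcont : ∀ i, Continuous (U i) := fun i =>
    continuous_const.min (continuous_const.max ((continuous_id.sub continuous_const).div_const δ))
  have hU01 : ∀ i z, 0 ≤ U i z ∧ U i z ≤ 1 := fun i z =>
    ⟨le_min one_pos.le (le_max_left _ _), min_le_left _ _⟩
  have hUanti : ∀ i z, U (i + 1) z ≤ U i z := by
    intro i z
    refine min_le_min le_rfl (max_le_max le_rfl ?_)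
    have hp : p i ≤ p (i + 1) := by rw [hp_succ]; linarith
    gcongr
  have hU0of : ∀ i z, z ≤ p i → U i z = 0 := by
    intro i z hz
    show min 1 (max 0 ((z - p i) / δ)) = 0
    rw [max_eq_left (div_nonpos_of_nonpos_of_nonneg (by linarith) hδ0.le),
      min_eq_right zero_le_one]
  have hU1of : ∀ i z, p i + δ ≤ z → U i z = 1 := by
    intro i z hz
    show min 1 (max 0 ((z - p i) / δ)) = 1
    exact min_eq_left (le_max_of_le_right ((le_div_iff₀ hδ0).2 (by linarith)))
  have hUsupp : ∀ i z, U i z - U (i + 1) z ≠ 0 → |z - p i| < 2 * δ := by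
    intro i z h
    by_contra habs
    push_neg at habs
    rcases le_abs.1 habs with h1 | h1
    · -- z - p i ≥ 2δ : both equal 1
      have e1 : U i z = 1 := hU1of i z (by linarith)
      have e2 : U (i + 1) z = 1 := hU1of (i + 1) z (by rw [hp_succ]; linarith)
      exact h (by rw [e1, e2]; ring)
    · -- z ≤ p i - 2δ : both equal 0
      have hz : z ≤ p i := by linarith
      have e1 : U i z = 0 := hU0of i z hz
      have e2 : U (i + 1) z = 0 := hU0of (i + 1) z (by rw [hp_succ]; linarith)
      exact h (by rw [e1, e2]; ring)
  set S : ℝ → ℝ := fun z => ∑ i ∈ Finset.range n, (U i z - U (i + 1) z) with hSdef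
  have hScont : Continuous S :=
    continuous_finset_sum _ fun i _ => (hUcont i).sub (hUcont (i + 1))
  have hStele : ∀ z, S z = U 0 z - U n z := fun z => Finset.sum_range_sub' (fun i => U i z) n
  have hS0 : ∀ z, 0 ≤ S z := fun z =>
    Finset.sum_nonneg fun i _ => by linarith [hUanti i z]
  have hSle1 : ∀ z, S z ≤ 1 := by
    intro z
    rw [hStele]
    linarith [(hU01 0 z).2, (hU01 n z).1]
  have hS1 : ∀ z, |z| ≤ R + 1 → S z = 1 := by
    intro z hz
    obtain ⟨hz1, hz2⟩ := abs_le.1 hz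
    rw [hStele]
    have hp0 : p 0 = a := by show a + (0:ℕ) * δ = a; simp
    have h1 : U 0 z = 1 := hU1of 0 z (by rw [hp0, hadef]; linarith)
    have h2 : U n z = 0 := by
      refine hU0of n z ?_
      show z ≤ a + n * δ
      rw [hadef]; linarith
    rw [h1, h2]; ring
  -- bounded continuous hat functions
  have hBabs0 : ∀ i z, ‖U i z - U (i + 1) z‖ ≤ 1 := by
    intro i z
    rw [Real.norm_eq_abs, abs_le]
    constructor
    · linarith [(hU01 i z).1, (hU01 (i + 1) z).2]
    · linarith [(hU01 i z).2, (hU01 (i + 1) z).1]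
  set hB : ℕ → BoundedContinuousFunction ℝ ℝ := fun i =>
    BoundedContinuousFunction.ofNormedAddCommGroup (fun z => U i z - U (i + 1) z)
      ((hUcont i).sub (hUcont (i + 1))) 1 (hBabs0 i) with hBdef'
  have hBcoe : ∀ i z, hB i z = U i z - U (i + 1) z := fun i z => rfl
  have hTabs0 : ∀ z, ‖1 - S z‖ ≤ 1 := by
    intro z
    rw [Real.norm_eq_abs, abs_le]
    exact ⟨by linarith [hSle1 z], by linarith [hS0 z]⟩
  set hT : BoundedContinuousFunction ℝ ℝ :=
    BoundedContinuousFunction.ofNormedAddCommGroup (fun z => 1 - S z)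
      (continuous_const.sub hScont) 1 hTabs0 with hTdef
  have hTcoe : ∀ z, hT z = 1 - S z := fun z => rfl
  set gc : BoundedContinuousFunction ℝ ℝ := BoundedContinuousFunction.const ℝ (g 0) with hgcdef
  have hgccoe : ∀ r : ℝ, gc r = g 0 := fun r => rfl
  -- the approximating functionals
  set bfun : (Ω → Measure ℝ) → (Ω → ℝ) → ℝ := fun mm xx =>
    (∑ i ∈ Finset.range n, ∫ ω, g (∫ y, φ (y + p i) ∂(mm ω)) * hB i (xx ω) ∂P) +
      ∫ ω, gc (∫ y, φ y ∂(mm ω)) * hT (xx ω) ∂P with hbfundef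
  have hbconv : Tendsto (fun t => bfun (μ t) (X t)) atTop (𝓝 (bfun ν Y)) := by
    apply Tendsto.add
    · apply tendsto_finset_sum
      intro i _
      exact hconv g (hB i) (fun y => φ (y + p i))
        (hφ.comp (continuous_id.add continuous_const))
        (hφc.comp_homeomorph (Homeomorph.addRight (p i)))
    · exact hconv gc hT φ hφ hφc
  -- the key error estimate
  have key : ∀ (mm : Ω → Measure ℝ) (xx : Ω → ℝ), Measurable mm → Measurable xx →
      (∀ ω, IsLocallyFiniteMeasure (mm ω)) → ∀ e1 e2 : ℝ,
      (P {ω | R + 1 ≤ |xx ω|}).toReal ≤ e1 → (P {ω | A ≤ mm ω C}).toReal ≤ e2 →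
      |(∫ ω, g (∫ y, φ (y + xx ω) ∂(mm ω)) ∂P) - bfun mm xx| ≤
        ε₁ + 2 * ‖g‖ * e1 + 2 * ‖g‖ * e2 := by
    intro mm xx hmm hxx hloc e1 e2 he1 he2
    set F : Ω → ℝ := fun ω => g (∫ y, φ (y + xx ω) ∂(mm ω)) with hFdef
    have hFmeas : Measurable F :=
      g.continuous.measurable.comp (RMTC_meas_joint mm hmm hloc xx hxx φ hφ hφc)
    have hgabs : ∀ z : ℝ, |g z| ≤ ‖g‖ := fun z => by
      have := g.norm_coe_le_norm z; rwa [Real.norm_eq_abs] at this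
    have hFint : Integrable F P := hbddint F ‖g‖ hFmeas (fun ω => hgabs _)
    set GS : Ω → ℝ := fun ω =>
      ∑ i ∈ Finset.range n, g (∫ y, φ (y + p i) ∂(mm ω)) * hB i (xx ω) with hGSdef
    set GT : Ω → ℝ := fun ω => gc (∫ y, φ y ∂(mm ω)) * hT (xx ω) with hGTdef
    set G : Ω → ℝ := fun ω => GS ω + GT ω with hGdef
    have hGimeas : ∀ i, Measurable (fun ω => g (∫ y, φ (y + p i) ∂(mm ω)) * hB i (xx ω)) := by
      intro i
      exact (g.continuous.measurable.comp (RMTC_meas_fixed mm hmm hloc _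
        (hφ.comp (continuous_id.add continuous_const))
        (hφc.comp_homeomorph (Homeomorph.addRight (p i))))).mul
        ((hB i).continuous.measurable.comp hxx)
    have hBabs : ∀ i z, |hB i z| ≤ 1 := by
      intro i z
      rw [hBcoe, abs_le]
      constructor
      · linarith [(hU01 i z).1, (hU01 (i + 1) z).2]
      · linarith [(hU01 i z).2, (hU01 (i + 1) z).1]
    have hGiint : ∀ i, Integrable (fun ω => g (∫ y, φ (y + p i) ∂(mm ω)) * hB i (xx ω)) P := by
      intro i
      refine hbddint _ (‖g‖ * 1) (hGimeas i) (fun ω => ?_)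
      rw [abs_mul]
      exact mul_le_mul (hgabs _) (hBabs _ _) (abs_nonneg _) hgnn
    have hGSint : Integrable GS P := integrable_finset_sum _ fun i _ => hGiint i
    have hGTmeas : Measurable GT :=
      (gc.continuous.measurable.comp (RMTC_meas_fixed mm hmm hloc φ hφ hφc)).mul
        (hT.continuous.measurable.comp hxx)
    have hTabs : ∀ z, |hT z| ≤ 1 := fun z => by
      rw [hTcoe]
      have := hTabs0 z; rwa [Real.norm_eq_abs] at this
    have hBnn : ∀ i z, 0 ≤ hB i z := fun i z => by
      rw [hBcoe]; linarith [hUanti i z]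
    have hGTint : Integrable GT P := by
      refine hbddint _ (‖g‖ * 1) hGTmeas (fun ω => ?_)
      show |gc (∫ y, φ y ∂(mm ω)) * hT (xx ω)| ≤ ‖g‖ * 1
      rw [abs_mul, hgccoe]
      exact mul_le_mul (hgabs _) (hTabs _) (abs_nonneg _) hgnn
    have hGint : Integrable G P := hGSint.add hGTint
    have hbeq : bfun mm xx = ∫ ω, G ω ∂P := by
      calc bfun mm xx
          = (∑ i ∈ Finset.range n, ∫ ω, g (∫ y, φ (y + p i) ∂(mm ω)) * hB i (xx ω) ∂P) +
            ∫ ω, GT ω ∂P := rfl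
        _ = (∫ ω, GS ω ∂P) + ∫ ω, GT ω ∂P := by
            rw [← integral_finset_sum _ (fun i _ => hGiint i)]
        _ = ∫ ω, G ω ∂P := (integral_add hGSint hGTint).symm
    set bad1 : Set Ω := {ω | R + 1 ≤ |xx ω|} with hbad1def
    have hbad1m : MeasurableSet bad1 := measurableSet_le measurable_const hxx.abs
    set bad2 : Set Ω := {ω | A ≤ mm ω C} with hbad2def
    have hbad2m : MeasurableSet bad2 :=
      measurableSet_le measurable_const ((Measure.measurable_coe hCm).comp hmm)
    set RHSf : Ω → ℝ := fun ω => ε₁ + 2 * ‖g‖ * bad1.indicator (fun _ => (1:ℝ)) ω +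
      2 * ‖g‖ * bad2.indicator (fun _ => (1:ℝ)) ω with hRHSdef
    have hRHSint : Integrable RHSf P :=
      (((integrable_const ε₁).add
        (((integrable_const (1:ℝ)).indicator hbad1m).const_mul (2 * ‖g‖)))).add
        (((integrable_const (1:ℝ)).indicator hbad2m).const_mul (2 * ‖g‖))
    have hind1nn : ∀ ω', (0:ℝ) ≤ bad1.indicator (fun _ => (1:ℝ)) ω' :=
      fun ω' => Set.indicator_nonneg (fun _ _ => zero_le_one) _
    have hind2nn : ∀ ω', (0:ℝ) ≤ bad2.indicator (fun _ => (1:ℝ)) ω' :=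
      fun ω' => Set.indicator_nonneg (fun _ _ => zero_le_one) _
    have hGabs : ∀ ω, |G ω| ≤ ‖g‖ := by
      intro ω
      have hGS : |GS ω| ≤ ‖g‖ * S (xx ω) := by
        calc |GS ω|
            ≤ ∑ i ∈ Finset.range n, |g (∫ y, φ (y + p i) ∂(mm ω)) * hB i (xx ω)| :=
              Finset.abs_sum_le_sum_abs _ _
          _ ≤ ∑ i ∈ Finset.range n, ‖g‖ * (U i (xx ω) - U (i + 1) (xx ω)) := by
              refine Finset.sum_le_sum (fun i _ => ?_)
              rw [abs_mul, hBcoe]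
              rw [abs_of_nonneg (by linarith [hUanti i (xx ω)] : (0:ℝ) ≤ U i (xx ω) - U (i + 1) (xx ω))]
              exact mul_le_mul_of_nonneg_right (hgabs _) (by linarith [hUanti i (xx ω)])
          _ = ‖g‖ * S (xx ω) := by rw [← Finset.mul_sum]
      have hGT2 : |GT ω| ≤ ‖g‖ * (1 - S (xx ω)) := by
        show |gc (∫ y, φ y ∂(mm ω)) * hT (xx ω)| ≤ _
        rw [abs_mul, hgccoe, hTcoe]
        rw [abs_of_nonneg (by linarith [hSle1 (xx ω)] : (0:ℝ) ≤ 1 - S (xx ω))]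
        exact mul_le_mul_of_nonneg_right (hgabs _) (by linarith [hSle1 (xx ω)])
      calc |G ω| ≤ |GS ω| + |GT ω| := abs_add_le _ _
        _ ≤ ‖g‖ * S (xx ω) + ‖g‖ * (1 - S (xx ω)) := add_le_add hGS hGT2
        _ = ‖g‖ := by ring
    have hsumhB : ∀ z, ∑ i ∈ Finset.range n, hB i z = S z := fun z =>
      (Finset.sum_congr rfl fun i _ => hBcoe i z).trans rfl
    have pointwise : ∀ ω, |F ω - G ω| ≤ RHSf ω := by
      intro ω
      have hRHSeq : RHSf ω = ε₁ + 2 * ‖g‖ * bad1.indicator (fun _ => (1:ℝ)) ω +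
          2 * ‖g‖ * bad2.indicator (fun _ => (1:ℝ)) ω := rfl
      have hFG2 : |F ω - G ω| ≤ 2 * ‖g‖ := by
        calc |F ω - G ω| ≤ |F ω| + |G ω| := abs_sub _ _
          _ ≤ ‖g‖ + ‖g‖ := add_le_add (hgabs _) (hGabs ω)
          _ = 2 * ‖g‖ := by ring
      by_cases h1 : ω ∈ bad1
      · rw [hRHSeq, Set.indicator_of_mem h1]
        have := mul_nonneg (by positivity : (0:ℝ) ≤ 2 * ‖g‖) (hind2nn ω)
        linarith [hε₁.le]
      by_cases h2 : ω ∈ bad2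
      · rw [hRHSeq, Set.indicator_of_mem h2]
        have := mul_nonneg (by positivity : (0:ℝ) ≤ 2 * ‖g‖) (hind1nn ω)
        linarith [hε₁.le]
      -- good event
      have h1' : ¬ (R + 1 ≤ |xx ω|) := h1
      have h2' : ¬ (A ≤ mm ω C) := h2
      have hxb : |xx ω| ≤ R + 1 := (not_le.1 h1').le
      have hmA : mm ω C ≤ A := (not_le.1 h2').le
      have hSx : S (xx ω) = 1 := hS1 _ hxb
      rw [hRHSeq, Set.indicator_of_notMem h1, Set.indicator_of_notMem h2]
      suffices hcore : |F ω - G ω| ≤ ε₁ by linarith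
      have hGT0 : GT ω = 0 := by
        show gc (∫ y, φ y ∂(mm ω)) * hT (xx ω) = 0
        rw [hTcoe, hSx]; ring
      have hFsum : F ω = ∑ i ∈ Finset.range n, F ω * hB i (xx ω) := by
        have hs : ∑ i ∈ Finset.range n, F ω * hB i (xx ω) = F ω * S (xx ω) := by
          rw [← Finset.mul_sum, hsumhB]
        rw [hs, hSx, mul_one]
      have key_i : ∀ i ∈ Finset.range n,
          |F ω - g (∫ y, φ (y + p i) ∂(mm ω))| * hB i (xx ω) ≤ ε₁ * hB i (xx ω) := by
        intro i _
        by_cases hz : hB i (xx ω) = 0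
        · rw [hz, mul_zero, mul_zero]
        · have hzU : U i (xx ω) - U (i + 1) (xx ω) ≠ 0 := by
            rw [hBcoe] at hz; exact hz
          have hdist : |xx ω - p i| < 2 * δ := hUsupp i (xx ω) hzU
          have hpib : |p i| ≤ R + 3 := by
            have habs2 : |p i| ≤ |xx ω| + |xx ω - p i| := by
              calc |p i| = |xx ω - (xx ω - p i)| := by congr 1; ring
                _ ≤ |xx ω| + |xx ω - p i| := abs_sub _ _
            linarith
          have hxb3 : |xx ω| ≤ R + 3 := by linarith
          have hIu := hIbound (mm ω) (hloc ω) (xx ω) hxb3 hmA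
          have hIv := hIbound (mm ω) (hloc ω) (p i) hpib hmA
          have hdiff := hIdiff (mm ω) (hloc ω) (xx ω) (p i) hxb3 hpib (by linarith) hmA
          have hg := hθ _ _ hIu hIv hdiff
          exact mul_le_mul_of_nonneg_right hg (hBnn i _)
      calc |F ω - G ω|
          = |∑ i ∈ Finset.range n, (F ω - g (∫ y, φ (y + p i) ∂(mm ω))) * hB i (xx ω)| := by
            have hGeq : G ω = GS ω + GT ω := rfl
            rw [hGeq, hGT0, add_zero]
            congr 1
            have hGSeq : GS ω = ∑ i ∈ Finset.range n, g (∫ y, φ (y + p i) ∂(mm ω)) * hB i (xx ω) := rfl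
            rw [hGSeq]
            conv_lhs => rw [hFsum]
            rw [← Finset.sum_sub_distrib]
            exact Finset.sum_congr rfl fun i _ => by ring
        _ ≤ ∑ i ∈ Finset.range n, |(F ω - g (∫ y, φ (y + p i) ∂(mm ω))) * hB i (xx ω)| :=
            Finset.abs_sum_le_sum_abs _ _
        _ = ∑ i ∈ Finset.range n, |F ω - g (∫ y, φ (y + p i) ∂(mm ω))| * hB i (xx ω) := by
            refine Finset.sum_congr rfl fun i _ => ?_
            rw [abs_mul, abs_of_nonneg (hBnn i _)]
        _ ≤ ∑ i ∈ Finset.range n, ε₁ * hB i (xx ω) := Finset.sum_le_sum key_i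
        _ = ε₁ * S (xx ω) := by
            rw [← Finset.mul_sum, hsumhB]
        _ = ε₁ := by rw [hSx, mul_one]
    have hei1 : ∫ ω, bad1.indicator (fun _ => (1:ℝ)) ω ∂P = (P bad1).toReal := by
      rw [integral_indicator_const _ hbad1m]; simp [Measure.real]
    have hei2 : ∫ ω, bad2.indicator (fun _ => (1:ℝ)) ω ∂P = (P bad2).toReal := by
      rw [integral_indicator_const _ hbad2m]; simp [Measure.real]
    calc |(∫ ω, F ω ∂P) - bfun mm xx|
        = |∫ ω, (F ω - G ω) ∂P| := by rw [hbeq, integral_sub hFint hGint]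
      _ ≤ ∫ ω, |F ω - G ω| ∂P := by
          simpa [Real.norm_eq_abs] using norm_integral_le_integral_norm (fun ω => F ω - G ω) (μ := P)
      _ ≤ ∫ ω, RHSf ω ∂P := integral_mono ((hFint.sub hGint).abs) hRHSint pointwise
      _ = ε₁ + 2 * ‖g‖ * (P bad1).toReal + 2 * ‖g‖ * (P bad2).toReal := by
          have hint1 : Integrable (fun ω => ε₁ + 2 * ‖g‖ * bad1.indicator (fun _ => (1:ℝ)) ω) P :=
            (integrable_const ε₁).add (((integrable_const (1:ℝ)).indicator hbad1m).const_mul (2 * ‖g‖))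
          have hint2 : Integrable (fun ω => 2 * ‖g‖ * bad2.indicator (fun _ => (1:ℝ)) ω) P :=
            ((integrable_const (1:ℝ)).indicator hbad2m).const_mul (2 * ‖g‖)
          have hRHSfeq : RHSf = fun ω => (ε₁ + 2 * ‖g‖ * bad1.indicator (fun _ => (1:ℝ)) ω) +
              2 * ‖g‖ * bad2.indicator (fun _ => (1:ℝ)) ω := rfl
          rw [hRHSfeq, integral_add hint1 hint2, integral_add (integrable_const ε₁)
            (((integrable_const (1:ℝ)).indicator hbad1m).const_mul (2 * ‖g‖)),
            integral_const, integral_const_mul, integral_const_mul, hei1, hei2]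
          simp [measure_univ]
      _ ≤ ε₁ + 2 * ‖g‖ * e1 + 2 * ‖g‖ * e2 := by
          have hc : (0:ℝ) ≤ 2 * ‖g‖ := by positivity
          exact add_le_add (add_le_add le_rfl (mul_le_mul_of_nonneg_left he1 hc))
            (mul_le_mul_of_nonneg_left he2 hc)
  -- assembly
  have hYtail : (P {ω | R + 1 ≤ |Y ω|}).toReal ≤ 2 * ε' := by
    have hsub : {ω | R + 1 ≤ |Y ω|} ⊆ {ω | R ≤ |Y ω|} := fun ω hω => by
      have : R + 1 ≤ |Y ω| := hω
      show R ≤ |Y ω|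
      linarith
    have hm := ENNReal.toReal_mono (measure_ne_top P _) (measure_mono hsub)
    linarith
  have hlimerr := key ν Y hνmeas hYmeas hνloc (2 * ε') ε' hYtail hMarkν
  have hbev : ∀ᶠ t in atTop, |bfun (μ t) (X t) - bfun ν Y| < ε₁ := by
    have h := Metric.tendsto_nhds.1 hbconv ε₁ hε₁
    simpa [Real.dist_eq] using h
  have hεhalf : 2 * ‖g‖ * ε' ≤ ε₁ := by nlinarith [mul_nonneg hgnn hε'.le]
  filter_upwards [hXtail, hbev] with t ht1 ht2
  have hterr := key (μ t) (X t) (hμmeas t) (hXmeas t) (hμloc t) (2 * ε') ε' ht1 (hMark t)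
  rw [Real.dist_eq]
  have h3 := abs_sub_le (∫ ω, g (∫ y, φ (y + X t ω) ∂(μ t ω)) ∂P) (bfun (μ t) (X t))
    (∫ ω, g (∫ y, φ (y + Y ω) ∂(ν ω)) ∂P)
  have h4 := abs_sub_le (bfun (μ t) (X t)) (bfun ν Y)
    (∫ ω, g (∫ y, φ (y + Y ω) ∂(ν ω)) ∂P)
  have h5 := abs_sub_comm (bfun ν Y) (∫ ω, g (∫ y, φ (y + Y ω) ∂(ν ω)) ∂P)
  linarith
end

section
/- Let v : [0,∞) → [0,∞) be measurable with ∫₀^∞ y·e^{√2·y}·v(y) dy < ∞. Fix r ≥ 0 and x > 0. Then lim_{t→∞} (t^{3/2}·e^{−√2·x}/√(2π(t−r)))·∫₀^∞ v(y)·e^{√2·y}·e^{−(y − x + (3/(2√2))·log t)²/(2(t−r))}·(1 − e^{−2·y·x/(t−r)}) dy = √(2/π)·x·e^{−√2·x}·∫₀^∞ y·e^{√2·y}·v(y) dy. -/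
open MeasureTheory Filter Topology

private lemma lim_sub' (r : ℝ) : Tendsto (fun t : ℝ => t - r) atTop atTop := by
  simpa [sub_eq_add_neg] using tendsto_atTop_add_const_right atTop (-r) tendsto_id

private lemma lim_rpow_ratio (r : ℝ) :
    Tendsto (fun t : ℝ => t ^ ((3:ℝ)/2) / (t - r) ^ ((3:ℝ)/2)) atTop (𝓝 1) := by
  have h0 : Tendsto (fun t : ℝ => r / (t - r)) atTop (𝓝 0) := (lim_sub' r).const_div_atTop r
  have h1 : Tendsto (fun t : ℝ => t / (t - r)) atTop (𝓝 1) := by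
    have := h0.const_add (1:ℝ)
    rw [add_zero] at this
    refine this.congr' ?_
    filter_upwards [eventually_gt_atTop (r + 1)] with t ht
    have h : t - r ≠ 0 := by nlinarith
    field_simp
    ring
  have h2 : Tendsto (fun t : ℝ => (t / (t - r)) ^ ((3:ℝ)/2)) atTop (𝓝 1) := by
    simpa using h1.rpow_const (Or.inl one_ne_zero)
  refine h2.congr' ?_
  filter_upwards [eventually_gt_atTop (max 0 r + 1)] with t ht
  have ht0 : 0 ≤ t := by have := le_max_left 0 r; nlinarith
  have htr : 0 ≤ t - r := by have := le_max_right 0 r; nlinarith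
  rw [Real.div_rpow ht0 htr]

private lemma lim_log_sq (r a c : ℝ) :
    Tendsto (fun t : ℝ => (a + c * Real.log t) ^ 2 / (2 * (t - r))) atTop (𝓝 0) := by
  have h : ∀ n : ℕ, Tendsto (fun t : ℝ => Real.log t ^ n / (2 * t + -(2*r))) atTop (𝓝 0) :=
    fun n => Real.tendsto_pow_log_div_mul_add_atTop 2 (-(2*r)) n two_ne_zero
  have h0 := (h 0).const_mul (a^2)
  have h1 := (h 1).const_mul (2*a*c)
  have h2 := (h 2).const_mul (c^2)
  have hsum := (h0.add h1).add h2
  simp only [add_zero, mul_zero] at hsum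
  refine hsum.congr' ?_
  filter_upwards [eventually_gt_atTop (max 0 r + 1)] with t ht
  have htr : t - r ≠ 0 := by have := le_max_right 0 r; nlinarith
  have htr' : 2 * t + -(2*r) ≠ 0 := by have := le_max_right 0 r; nlinarith
  rw [show (2 * t + -(2*r)) = 2 * (t - r) by ring]
  ring

private lemma lim_one_sub_exp (r a : ℝ) :
    Tendsto (fun t : ℝ => (t - r) * (1 - Real.exp (-a / (t - r)))) atTop (𝓝 a) := by
  have hd : HasDerivAt (fun h : ℝ => Real.exp (-(a * h))) (-a) 0 := by
    have : HasDerivAt (fun h : ℝ => -(a * h)) (-a) 0 := by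
      have h := ((hasDerivAt_id (0:ℝ)).const_mul a).neg
      rw [mul_one] at h
      exact h
    simpa using this.exp
  have hs := hasDerivAt_iff_tendsto_slope.1 hd
  have hu : Tendsto (fun t : ℝ => (t - r)⁻¹) atTop (𝓝[≠] 0) := by
    rw [tendsto_nhdsWithin_iff]
    constructor
    · exact (lim_sub' r).inv_tendsto_atTop
    · filter_upwards [eventually_gt_atTop (r + 1)] with t ht
      have : t - r > 0 := by linarith
      simp [inv_ne_zero this.ne']
  have hcomp := hs.comp hu
  have key : Tendsto (fun t : ℝ => (Real.exp (-(a * (t - r)⁻¹)) - 1) / (t - r)⁻¹) atTop (𝓝 (-a)) := by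
    refine hcomp.congr fun t => ?_
    simp [slope, Function.comp, mul_comm]
  have hneg := key.neg
  rw [neg_neg] at hneg
  refine hneg.congr' ?_
  filter_upwards [eventually_gt_atTop (r + 1)] with t ht
  have h0 : t - r ≠ 0 := by nlinarith
  rw [neg_div]
  field_simp
  ring

private lemma pref_le (r t : ℝ) (h1 : 2*r ≤ t) (h2 : 2 ≤ t) :
    t ^ ((3:ℝ)/2) ≤ 3 * ((t - r) * Real.sqrt (t - r)) := by
  have htr : 0 < t - r := by nlinarith
  have h4 : t ^ ((3:ℝ)/2) ≤ (2*(t-r)) ^ ((3:ℝ)/2) :=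
    Real.rpow_le_rpow (by nlinarith) (by nlinarith) (by norm_num)
  have h5 : (2*(t-r)) ^ ((3:ℝ)/2) = 2 ^ ((3:ℝ)/2) * (t-r) ^ ((3:ℝ)/2) :=
    Real.mul_rpow (by norm_num) htr.le
  have h6 : (t-r) ^ ((3:ℝ)/2) = (t - r) * Real.sqrt (t - r) := by
    rw [Real.sqrt_eq_rpow, show ((3:ℝ)/2) = 1 + 1/2 by norm_num, Real.rpow_add htr,
      Real.rpow_one]
  have h7 : (2:ℝ) ^ ((3:ℝ)/2) ≤ 3 := by
    rw [show ((3:ℝ)/2) = 1 + 1/2 by norm_num, Real.rpow_add two_pos, Real.rpow_one,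
      ← Real.sqrt_eq_rpow]
    nlinarith [Real.sq_sqrt (by norm_num : (0:ℝ) ≤ 2), Real.sqrt_nonneg 2]
  have h8 : 0 ≤ (t-r) ^ ((3:ℝ)/2) := Real.rpow_nonneg htr.le _
  nlinarith [h4, h5, h6, h7, h8]

private lemma sqrt_two_div_pi : Real.sqrt (2/Real.pi) = 2 / Real.sqrt (2*Real.pi) := by
  have hpi := Real.pi_pos
  have hs : 0 < Real.sqrt (2*Real.pi) := Real.sqrt_pos.2 (by positivity)
  rw [eq_div_iff hs.ne', ← Real.sqrt_mul (by positivity)]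
  rw [show 2/Real.pi*(2*Real.pi) = 4 by field_simp; ring]
  rw [show (4:ℝ) = 2^2 by norm_num, Real.sqrt_sq (by norm_num)]

/-- the large-time limit of `t^{3/2}·ψ(r,t,x+m(t))` for a general nonnegative
integrable density `v`, with limit `√(2/π)·x·e^{−√2·x}·∫₀^∞ y·e^{√2·y}·v(y) dy`. -/
theorem psi_at_m_asymptotics
    (v : ℝ → ℝ) (hv_meas : Measurable v) (hv_nonneg : ∀ y : ℝ, 0 ≤ y → 0 ≤ v y)
    (hv_int : IntegrableOn (fun y => y * Real.exp (Real.sqrt 2 * y) * v y) (Set.Ioi 0))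
    (r : ℝ) (hr : 0 ≤ r) (x : ℝ) (hx : 0 < x) :
    Tendsto
      (fun t : ℝ =>
        (t ^ ((3 : ℝ) / 2) * Real.exp (-(Real.sqrt 2) * x) / Real.sqrt (2 * Real.pi * (t - r))) *
          ∫ y in Set.Ioi (0 : ℝ),
            v y * Real.exp (Real.sqrt 2 * y) *
              Real.exp (-((y - x + (3 / (2 * Real.sqrt 2)) * Real.log t) ^ 2) / (2 * (t - r))) *
              (1 - Real.exp (-(2 * y * x) / (t - r))))
      atTop
      (𝓝 (Real.sqrt (2 / Real.pi) * x * Real.exp (-(Real.sqrt 2) * x) *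
        ∫ y in Set.Ioi (0 : ℝ), y * Real.exp (Real.sqrt 2 * y) * v y)) := by
  have hpi := Real.pi_pos
  have hs2pi : 0 < Real.sqrt (2*Real.pi) := Real.sqrt_pos.2 (by positivity)
  set c3 : ℝ := 3 / (2 * Real.sqrt 2) with hc3
  set g : ℝ → ℝ → ℝ := fun t y =>
    v y * Real.exp (Real.sqrt 2 * y) *
      Real.exp (-((y - x + c3 * Real.log t) ^ 2) / (2 * (t - r))) *
      (1 - Real.exp (-(2 * y * x) / (t - r))) with hg
  set F : ℝ → ℝ → ℝ := fun t y =>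
    (t ^ ((3:ℝ)/2) / Real.sqrt (2 * Real.pi * (t - r))) * g t y with hF
  set f : ℝ → ℝ := fun y =>
    (Real.sqrt (2/Real.pi) * x) * (y * Real.exp (Real.sqrt 2 * y) * v y) with hf
  set bound : ℝ → ℝ := fun y =>
    (6 * x / Real.sqrt (2*Real.pi)) * (y * Real.exp (Real.sqrt 2 * y) * v y) with hbd
  -- measurability
  have hmeas : ∀ᶠ t in atTop, AEStronglyMeasurable (F t) (volume.restrict (Set.Ioi 0)) := by
    refine Eventually.of_forall fun t => Measurable.aestronglyMeasurable ?_
    fun_prop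
  -- bound
  have h_bound : ∀ᶠ t in atTop, ∀ᵐ y ∂(volume.restrict (Set.Ioi (0:ℝ))), ‖F t y‖ ≤ bound y := by
    filter_upwards [eventually_ge_atTop (max (2*r) 2)] with t ht
    rw [ae_restrict_iff' measurableSet_Ioi]
    refine ae_of_all _ fun y hy => ?_
    have hy0 : 0 < y := hy
    have h2r : 2*r ≤ t := le_trans (le_max_left _ _) ht
    have h2 : 2 ≤ t := le_trans (le_max_right _ _) ht
    have htr : 0 < t - r := by nlinarith
    have ht0 : 0 < t := by nlinarith
    have hv0 : 0 ≤ v y := hv_nonneg y hy0.le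
    have hstr : 0 < Real.sqrt (t - r) := Real.sqrt_pos.2 htr
    have hGle : Real.exp (-((y - x + c3 * Real.log t) ^ 2) / (2 * (t - r))) ≤ 1 := by
      rw [Real.exp_le_one_iff]
      have : 0 ≤ ((y - x + c3 * Real.log t) ^ 2) / (2 * (t - r)) := by positivity
      rw [neg_div]; linarith
    have hGnn : 0 ≤ Real.exp (-((y - x + c3 * Real.log t) ^ 2) / (2 * (t - r))) :=
      (Real.exp_pos _).le
    have hHnn : 0 ≤ 1 - Real.exp (-(2 * y * x) / (t - r)) := by
      have : Real.exp (-(2 * y * x) / (t - r)) ≤ 1 := by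
        rw [Real.exp_le_one_iff]
        have : 0 ≤ (2 * y * x) / (t - r) := by positivity
        rw [neg_div]; linarith
      linarith
    have hHle : 1 - Real.exp (-(2 * y * x) / (t - r)) ≤ (2 * y * x) / (t - r) := by
      have := Real.add_one_le_exp (-(2 * y * x) / (t - r))
      rw [neg_div] at this ⊢
      linarith
    have hA : 0 ≤ t ^ ((3:ℝ)/2) / Real.sqrt (2 * Real.pi * (t - r)) := by positivity
    have hVnn : 0 ≤ v y * Real.exp (Real.sqrt 2 * y) := by positivity
    have hFnn : 0 ≤ F t y := by
      simp only [hF, hg]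
      apply mul_nonneg hA
      exact mul_nonneg (mul_nonneg hVnn hGnn) hHnn
    rw [Real.norm_eq_abs, abs_of_nonneg hFnn]
    have hGH : Real.exp (-((y - x + c3 * Real.log t) ^ 2) / (2 * (t - r))) *
        (1 - Real.exp (-(2 * y * x) / (t - r))) ≤ 1 * ((2 * y * x) / (t - r)) :=
      mul_le_mul hGle hHle hHnn zero_le_one
    have step1 : F t y ≤ (t ^ ((3:ℝ)/2) / Real.sqrt (2 * Real.pi * (t - r))) *
        ((v y * Real.exp (Real.sqrt 2 * y)) * ((2 * y * x) / (t - r))) := by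
      simp only [hF, hg]
      apply mul_le_mul_of_nonneg_left _ hA
      calc v y * Real.exp (Real.sqrt 2 * y) *
            Real.exp (-((y - x + c3 * Real.log t) ^ 2) / (2 * (t - r))) *
            (1 - Real.exp (-(2 * y * x) / (t - r)))
          = (v y * Real.exp (Real.sqrt 2 * y)) *
            (Real.exp (-((y - x + c3 * Real.log t) ^ 2) / (2 * (t - r))) *
              (1 - Real.exp (-(2 * y * x) / (t - r)))) := by ring
        _ ≤ (v y * Real.exp (Real.sqrt 2 * y)) * (1 * ((2 * y * x) / (t - r))) :=
            mul_le_mul_of_nonneg_left hGH hVnn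
        _ = (v y * Real.exp (Real.sqrt 2 * y)) * ((2 * y * x) / (t - r)) := by ring
    have hpre := pref_le r t h2r h2
    have hsm : Real.sqrt (2 * Real.pi * (t - r)) = Real.sqrt (2*Real.pi) * Real.sqrt (t - r) :=
      Real.sqrt_mul (by positivity) _
    have key : (t ^ ((3:ℝ)/2) / Real.sqrt (2 * Real.pi * (t - r))) * ((2 * y * x) / (t - r)) ≤
        (6 * x * y) / Real.sqrt (2*Real.pi) := by
      rw [hsm, div_mul_div_comm, div_le_div_iff₀ (by positivity) (by positivity)]
      nlinarith [mul_le_mul_of_nonneg_right hpre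
        (show 0 ≤ 2 * y * x * Real.sqrt (2*Real.pi) by positivity),
        Real.mul_self_sqrt htr.le, hstr.le, hs2pi.le]
    calc F t y ≤ (t ^ ((3:ℝ)/2) / Real.sqrt (2 * Real.pi * (t - r))) *
          ((v y * Real.exp (Real.sqrt 2 * y)) * ((2 * y * x) / (t - r))) := step1
      _ = ((t ^ ((3:ℝ)/2) / Real.sqrt (2 * Real.pi * (t - r))) * ((2 * y * x) / (t - r))) *
          (v y * Real.exp (Real.sqrt 2 * y)) := by ring
      _ ≤ ((6 * x * y) / Real.sqrt (2*Real.pi)) * (v y * Real.exp (Real.sqrt 2 * y)) :=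
          mul_le_mul_of_nonneg_right key hVnn
      _ = bound y := by simp only [hbd]; ring
  -- integrable bound
  have hbound_int : Integrable bound (volume.restrict (Set.Ioi (0:ℝ))) :=
    hv_int.const_mul _
  -- pointwise limit
  have h_lim : ∀ᵐ y ∂(volume.restrict (Set.Ioi (0:ℝ))), Tendsto (fun t => F t y) atTop (𝓝 (f y)) := by
    rw [ae_restrict_iff' measurableSet_Ioi]
    refine ae_of_all _ fun y hy => ?_
    have hy0 : 0 < y := hy
    have hratio := lim_rpow_ratio r
    have hgauss : Tendsto (fun t : ℝ =>
        Real.exp (-((y - x + c3 * Real.log t) ^ 2) / (2 * (t - r)))) atTop (𝓝 1) := by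
      have := (Real.continuous_exp.tendsto _).comp (lim_log_sq r (y - x) c3).neg
      simp only [neg_zero, Real.exp_zero, Function.comp] at this
      refine this.congr fun t => ?_
      simp [Function.comp, neg_div]
    have hH := lim_one_sub_exp r (2 * y * x)
    have hK : Tendsto (fun t : ℝ =>
        (1 / Real.sqrt (2*Real.pi)) * (t ^ ((3:ℝ)/2) / (t - r) ^ ((3:ℝ)/2)) *
          Real.exp (-((y - x + c3 * Real.log t) ^ 2) / (2 * (t - r))) *
          ((t - r) * (1 - Real.exp (-(2 * y * x) / (t - r)))))
        atTop (𝓝 ((1 / Real.sqrt (2*Real.pi)) * 1 * 1 * (2 * y * x))) :=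
      (((tendsto_const_nhds.mul hratio).mul hgauss).mul hH)
    have hval : (v y * Real.exp (Real.sqrt 2 * y)) *
        ((1 / Real.sqrt (2*Real.pi)) * 1 * 1 * (2 * y * x)) = f y := by
      simp only [hf, sqrt_two_div_pi]
      field_simp
    have hK2 := hK.const_mul (v y * Real.exp (Real.sqrt 2 * y))
    rw [hval] at hK2
    refine hK2.congr' ?_
    filter_upwards [eventually_gt_atTop (max 0 r + 1)] with t ht
    have ht0 : 0 < t := by have := le_max_left 0 r; nlinarith
    have htr : 0 < t - r := by have := le_max_right 0 r; nlinarith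
    have hstr : 0 < Real.sqrt (t - r) := Real.sqrt_pos.2 htr
    have hsm : Real.sqrt (2 * Real.pi * (t - r)) = Real.sqrt (2*Real.pi) * Real.sqrt (t - r) :=
      Real.sqrt_mul (by positivity) _
    have h32 : (t - r) ^ ((3:ℝ)/2) = (t - r) * Real.sqrt (t - r) := by
      rw [Real.sqrt_eq_rpow, show ((3:ℝ)/2) = 1 + 1/2 by norm_num, Real.rpow_add htr,
        Real.rpow_one]
    simp only [hF, hg, hsm, h32]
    field_simp
  have hdom := tendsto_integral_filter_of_dominated_convergence bound hmeas h_bound hbound_int h_lim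
  have hint : ∫ y in Set.Ioi (0:ℝ), f y =
      (Real.sqrt (2/Real.pi) * x) * ∫ y in Set.Ioi (0:ℝ), y * Real.exp (Real.sqrt 2 * y) * v y :=
    integral_const_mul _ _
  rw [hint] at hdom
  have hptr : Real.sqrt (2 / Real.pi) * x * Real.exp (-(Real.sqrt 2) * x) *
      ∫ y in Set.Ioi (0 : ℝ), y * Real.exp (Real.sqrt 2 * y) * v y =
      Real.exp (-(Real.sqrt 2) * x) * ((Real.sqrt (2/Real.pi) * x) *
        ∫ y in Set.Ioi (0 : ℝ), y * Real.exp (Real.sqrt 2 * y) * v y) := by ring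
  rw [hptr]
  refine Tendsto.congr (fun t => ?_) (hdom.const_mul (Real.exp (-(Real.sqrt 2) * x)))
  have : ∫ y in Set.Ioi (0:ℝ), F t y =
      (t ^ ((3:ℝ)/2) / Real.sqrt (2 * Real.pi * (t - r))) * ∫ y in Set.Ioi (0:ℝ), g t y :=
    integral_const_mul _ _
  rw [this]
  ring
end
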